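/- For every natural number n, the function f : ℤ → ℤ defined by f(x) = lcm(1,...,n) · C(x, n) preserves all congruences of ℤ, i.e., for all integers x and all nonzero integers k, k divides f(x+k) - f(x). -/

import Mathlib

/-- lcm(1,...,n), with value 1 for n = 0. -/
noncomputable def lcmUpTo (n : ℕ) : ℕ := (Finset.Icc 1 n).lcm id

lemma succ_mul_ring_choose (k : ℤ) (m : ℕ) :
    ((m + 1 : ℕ) : ℤ) * Ring.choose k (m + 1) = k * Ring.choose (k - 1) m := by
  have h1 := Ring.descPochhammer_eq_factorial_smul_choose k (m + 1)
  have h2 := Ring.descPochhammer_eq_factorial_smul_choose (k - 1) m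
  have h3 : (descPochhammer ℤ (m + 1)).smeval k
      = k * (descPochhammer ℤ m).smeval (k - 1) := by
    rw [descPochhammer_succ_left]
    simp [← Polynomial.eval_eq_smeval, Polynomial.eval_comp]
  rw [h1, h2] at h3
  have hfac : (Nat.factorial m : ℤ) ≠ 0 := by exact_mod_cast (Nat.factorial_ne_zero m)
  apply mul_left_cancel₀ hfac
  rw [nsmul_eq_mul, nsmul_eq_mul] at h3
  push_cast [Nat.factorial_succ] at h3 ⊢
  linarith [h3]

/-- The function x ↦ lcm(1,...,n)·C(x,n) preserves all congruences of ℤ. -/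
theorem lcm_mul_choose_congruence_preserving (n : ℕ) :
    ∀ (x k : ℤ), k ≠ 0 →
      k ∣ (lcmUpTo n : ℤ) * Ring.choose (x + k) n -
            (lcmUpTo n : ℤ) * Ring.choose x n := by
  intro x k hk
  rw [Ring.add_choose_eq n (Commute.all x k)]
  have hmem : ((n, 0) : ℕ × ℕ) ∈ Finset.HasAntidiagonal.antidiagonal n := by simp
  rw [← Finset.add_sum_erase _ _ hmem]
  simp only [Ring.choose_zero_right, mul_one]
  rw [mul_add, add_sub_cancel_left, Finset.mul_sum]
  apply Finset.dvd_sum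
  rintro ⟨i, j⟩ hij
  simp only [Finset.mem_erase, Finset.HasAntidiagonal.mem_antidiagonal, Prod.mk.injEq] at hij
  obtain ⟨hne, hsum⟩ := hij
  have hj : j ≠ 0 := by
    rintro rfl
    exact hne (Prod.ext (by omega) rfl)
  obtain ⟨m, rfl⟩ := Nat.exists_eq_succ_of_ne_zero hj
  -- j = m + 1 divides lcmUpTo n
  have hjdvd : (m + 1) ∣ lcmUpTo n := by
    apply Finset.dvd_lcm
    simp only [Finset.mem_Icc]
    omega
  obtain ⟨c, hc⟩ := hjdvd
  have hcz : (lcmUpTo n : ℤ) = ((m + 1 : ℕ) : ℤ) * (c : ℤ) := by exact_mod_cast hc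
  rw [hcz]
  simp only
  rw [show m.succ = m + 1 from rfl]
  have heq : ((m + 1 : ℕ) : ℤ) * (c : ℤ) * (Ring.choose x i * Ring.choose k (m + 1))
      = k * ((c : ℤ) * Ring.choose x i * Ring.choose (k - 1) m) := by
    have h := succ_mul_ring_choose k m
    linear_combination ((c : ℤ) * Ring.choose x i) * h
  rw [heq]
  exact Dvd.intro _ rfl
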